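/- Let Q be a quasi order and n ≥ 1. If f : [ℕ]^n → P_f(Q) is a bad array (where [ℕ]^n, the set of strictly increasing n-tuples of natural numbers, is a barrier), then there exists a bad array g : [ℕ]^{n+1} → Q. -/

import Mathlib

/-- `s` is a finite strictly increasing sequence of naturals. -/
def IncrList (s : List ℕ) : Prop := s.Chain' (· < ·)

/-- `s` is an initial segment of the increasing enumeration of the infinite set
enumerated by the strictly monotone `g`. -/
def InitSegOf (s : List ℕ) (g : ℕ → ℕ) : Prop := s = (List.range s.length).map g

/-- The relation `s ⊲ t`. -/
def TriRel (s t : List ℕ) : Prop :=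
  ∃ g : ℕ → ℕ, StrictMono g ∧ InitSegOf s g ∧ InitSegOf t (fun i => g (i + 1))

/-- The array given by the values of `f` on `B` is good for the quasi order `r`. -/
def GoodArr {Q : Type*} (r : Q → Q → Prop) (B : Set (List ℕ)) (f : List ℕ → Q) : Prop :=
  ∃ s ∈ B, ∃ t ∈ B, TriRel s t ∧ r (f s) (f t)

/-- The order on finite subsets of a quasi order `r`:
`a ≤ b` iff each `x ∈ a` admits `y ∈ b` with `r x y`. -/
def PfLe {Q : Type*} (r : Q → Q → Prop) (a b : Finset Q) : Prop :=
  ∀ x ∈ a, ∃ y ∈ b, r x y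

-- statement 2: a bad array `[ℕ]^n → P_f(Q)` yields a bad array `[ℕ]^{n+1} → Q`.
lemma triRel_take_tail (n : ℕ) (u : List ℕ) (hlen : u.length = n+1) (hc : IncrList u) :
    TriRel (u.take n) u.tail := by
  have hp : ∀ i j (hi : i < u.length) (hj : j < u.length), i < j → u[i] < u[j] := by
    have := (List.isChain_iff_pairwise.mp hc)
    rw [List.pairwise_iff_getElem] at this
    exact fun i j hi hj hij => this i j hi hj hij
  refine ⟨fun i => if h : i < n+1 then u[i]'(by omega) else u[n]'(by omega) + (i - n), ?_, ?_, ?_⟩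
  · apply strictMono_nat_of_lt_succ
    intro i
    by_cases h1 : i + 1 < n + 1
    · simp only [dif_pos (by omega : i < n+1), dif_pos h1]
      exact hp i (i+1) (by omega) (by omega) (by omega)
    · by_cases h2 : i < n + 1
      · have : i = n := by omega
        subst this
        simp only [dif_pos h2, dif_neg h1]
        omega
      · simp only [dif_neg h1, dif_neg h2]
        omega
  · unfold InitSegOf
    have hl : (u.take n).length = n := by simp [hlen]
    rw [hl]
    apply List.ext_getElem
    · simp [hlen]
    · intro i hi hi'
      simp only [List.getElem_take, List.getElem_map, List.getElem_range]
      rw [dif_pos (by simp [hlen] at hi; omega)]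
  · unfold InitSegOf
    have hl : u.tail.length = n := by simp [hlen]
    rw [hl]
    apply List.ext_getElem
    · simp [hlen]
    · intro i hi hi'
      simp only [List.getElem_tail, List.getElem_map, List.getElem_range]
      rw [dif_pos (by simp [hlen] at hi; omega)]

lemma take_mem (n : ℕ) (u : List ℕ) (hlen : u.length = n+1) (hc : IncrList u) :
    (u.take n).length = n ∧ IncrList (u.take n) := by
  exact ⟨by simp [hlen], hc.sublist (List.take_sublist n u)⟩

lemma tail_mem (n : ℕ) (u : List ℕ) (hlen : u.length = n+1) (hc : IncrList u) :
    u.tail.length = n ∧ IncrList u.tail := by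
  exact ⟨by simp [hlen], hc.sublist (List.tail_sublist u)⟩

theorem stmt2 {Q : Type*} [Preorder Q] (n : ℕ) (hn : 1 ≤ n) (f : List ℕ → Finset Q)
    (hf : ¬ GoodArr (PfLe ((· ≤ ·) : Q → Q → Prop))
      {s | s.length = n ∧ IncrList s} f) :
    ∃ g : List ℕ → Q,
      ¬ GoodArr ((· ≤ ·) : Q → Q → Prop) {s | s.length = n + 1 ∧ IncrList s} g := by
  classical
  -- key: for every u in the (n+1)-barrier, f (u.take n) ≰ f u.tail
  have key : ∀ u : List ℕ, u.length = n+1 → IncrList u →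
      ∃ x ∈ f (u.take n), ∀ y ∈ f u.tail, ¬ x ≤ y := by
    intro u hlen hc
    by_contra hcon
    push_neg at hcon
    exact hf ⟨u.take n, take_mem n u hlen hc, u.tail, tail_mem n u hlen hc,
      triRel_take_tail n u hlen hc, fun x hx => hcon x hx⟩
  have hQ : Nonempty Q := by
    have hr : IncrList (List.range (n+1)) := by
      unfold IncrList
      exact List.isChain_iff_pairwise.mpr (List.pairwise_lt_range (n := n+1))
    obtain ⟨x, hx, -⟩ := key (List.range (n+1)) (by simp) hr
    exact ⟨x⟩
  refine ⟨fun u => if h : ∃ x ∈ f (u.take n), ∀ y ∈ f u.tail, ¬ x ≤ y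
      then h.choose else Classical.arbitrary Q, ?_⟩
  rintro ⟨u, ⟨hul, huc⟩, v, ⟨hvl, hvc⟩, ⟨h, hmono, hu, hv⟩, hle⟩
  have hEu := key u hul huc
  have hEv := key v hvl hvc
  simp only [dif_pos hEu, dif_pos hEv] at hle
  obtain ⟨hu1, hu2⟩ := hEu.choose_spec
  obtain ⟨hv1, -⟩ := hEv.choose_spec
  -- u.tail = v.take n
  have heq : u.tail = v.take n := by
    unfold InitSegOf at hu hv
    rw [hul] at hu
    rw [hvl] at hv
    apply List.ext_getElem
    · simp [hul, hvl]
    · intro i hi hi'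
      have hi1 : i < n := by simpa [hul] using hi
      simp only [List.getElem_tail, List.getElem_take]
      rw [List.getElem_of_eq hu, List.getElem_of_eq hv]
      simp
  refine hu2 hEv.choose ?_ hle
  rw [heq]
  exact hv1
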